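/- Generating function identity relating the tetrahedron index and the quantum dilogarithm: for every integer $m$, $\sum_{e \in \mathbb{Z}} I_\Delta(m,e)(q)\, x^e = \frac{(q^{-m/2+1} x^{-1}; q)_\infty}{(q^{-m/2} x; q)_\infty}$ as elements of $\mathbb{Z}((x))[[q^{1/2}]]$. -/

import Mathlib

/- We render the identity `∑_e I_Δ(m,e) x^e = (q^{-m/2+1}x⁻¹;q)_∞ / (q^{-m/2}x;q)_∞`
analytically over `ℂ`, writing `t = q^{1/2}` (so `q = t²`), on a domain where
both sides converge. -/

/-- `(q;q)_n = ∏_{i=1}^n (1 - q^i)`. -/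
noncomputable def qPochN (q : ℂ) (n : ℕ) : ℂ :=
  ∏ i ∈ Finset.range n, (1 - q ^ (i + 1))

open Filter Topology

lemma qPochN_zero (q : ℂ) : qPochN q 0 = 1 := rfl

lemma qPochN_succ (q : ℂ) (n : ℕ) : qPochN q (n+1) = qPochN q n * (1 - q ^ (n+1)) :=
  Finset.prod_range_succ _ _

lemma one_sub_pow_ne_zero {q : ℂ} (hq : ‖q‖ < 1) (n : ℕ) : 1 - q ^ (n+1) ≠ 0 := by
  intro h
  rw [sub_eq_zero] at h
  have : ‖q ^ (n+1)‖ < 1 := by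
    rw [norm_pow]
    exact pow_lt_one₀ (norm_nonneg q) hq (Nat.succ_ne_zero n)
  rw [← h] at this
  simp at this

lemma qPochN_ne_zero {q : ℂ} (hq : ‖q‖ < 1) (n : ℕ) : qPochN q n ≠ 0 :=
  Finset.prod_ne_zero_iff.mpr fun i _ => one_sub_pow_ne_zero hq i

lemma exp_le_one_sub {r u : ℝ} (hr : r < 1) (hu : 0 ≤ u) (hur : u ≤ r) :
    Real.exp (-(u / (1 - r))) ≤ 1 - u := by
  have h1 : 0 < 1 - r := by linarith
  have h2 : (1 - u) * Real.exp (u / (1 - r)) ≥ 1 := by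
    have := Real.add_one_le_exp (u / (1 - r))
    have h3 : (1 - u) * (u / (1 - r) + 1) ≥ 1 := by
      rw [ge_iff_le, ← sub_nonneg]
      have : (1 - u) * (u / (1 - r) + 1) - 1 = u * ((1 - u) / (1 - r) - 1) := by
        field_simp; ring
      rw [this]
      have : (1 - u) / (1 - r) ≥ 1 := (le_div_iff₀ h1).mpr (by linarith)
      nlinarith
    nlinarith [Real.exp_pos (u / (1 - r)), (by linarith : 0 ≤ 1 - u)]
  rw [Real.exp_neg]
  rw [inv_le_iff_one_le_mul₀ (Real.exp_pos _)]
  linarith [h2]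

lemma qPochN_norm_lower {q : ℂ} (hq : ‖q‖ < 1) (n : ℕ) :
    Real.exp (-(‖q‖ / (1 - ‖q‖) ^ 2)) ≤ ‖qPochN q n‖ := by
  set r := ‖q‖ with hr
  have hr0 : 0 ≤ r := norm_nonneg q
  have h1r : 0 < 1 - r := by linarith
  have step1 : ∏ i ∈ Finset.range n, (1 - r ^ (i+1)) ≤ ‖qPochN q n‖ := by
    rw [qPochN, norm_prod]
    apply Finset.prod_le_prod
    · intro i _
      have : r ^ (i+1) ≤ 1 := pow_le_one₀ hr0 hq.le
      linarith
    · intro i _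
      calc 1 - r ^ (i+1) = ‖(1:ℂ)‖ - ‖q ^ (i+1)‖ := by simp [hr]
        _ ≤ ‖1 - q ^ (i+1)‖ := norm_sub_norm_le _ _
  refine le_trans ?_ step1
  have step2 : Real.exp (-(∑ i ∈ Finset.range n, r ^ (i+1) / (1 - r))) ≤
      ∏ i ∈ Finset.range n, (1 - r ^ (i+1)) := by
    rw [← Finset.sum_neg_distrib, Real.exp_sum]
    apply Finset.prod_le_prod
    · intro i _; positivity
    · intro i _
      exact exp_le_one_sub hq (by positivity) (pow_le_of_le_one hr0 hq.le (Nat.succ_ne_zero i))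
  refine le_trans ?_ step2
  apply Real.exp_le_exp.mpr
  rw [neg_le_neg_iff]
  rw [← Finset.sum_div, div_le_div_iff₀ h1r (by positivity)]
  have hsum : ∑ i ∈ Finset.range n, r ^ (i+1) ≤ r / (1 - r) := by
    have h2 : ∑ i ∈ Finset.range n, r ^ (i+1) = r * ∑ i ∈ Finset.range n, r ^ i := by
      rw [Finset.mul_sum]
      exact Finset.sum_congr rfl fun i _ => by ring
    rw [h2, div_eq_mul_inv]
    apply mul_le_mul_of_nonneg_left _ hr0
    calc ∑ i ∈ Finset.range n, r ^ i ≤ ∑' i : ℕ, r ^ i :=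
          Summable.sum_le_tsum _ (fun i _ => by positivity) (summable_geometric_of_lt_one hr0 hq)
      _ = (1 - r)⁻¹ := tsum_geometric_of_lt_one hr0 hq
  calc (∑ i ∈ Finset.range n, r ^ (i+1)) * (1 - r) ^ 2
      ≤ (r / (1 - r)) * (1 - r) ^ 2 := by
        apply mul_le_mul_of_nonneg_right hsum (by positivity)
    _ = r * (1 - r) := by field_simp

section PsumAux

lemma summable_norm_coeff_pow {A : ℕ → ℂ} {C : ℝ} (hA : ∀ k, ‖A k‖ ≤ C) {w : ℂ}
    (hw : ‖w‖ < 1) : Summable (fun k => ‖A k * w ^ k‖) := by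
  apply Summable.of_nonneg_of_le (fun k => norm_nonneg _) (fun k => ?_)
    ((summable_geometric_of_lt_one (norm_nonneg w) hw).mul_left C)
  rw [norm_mul, norm_pow]
  exact mul_le_mul_of_nonneg_right (hA k) (by positivity)

lemma psum_sub_one_norm {A : ℕ → ℂ} {C : ℝ} (hA : ∀ k, ‖A k‖ ≤ C) (hA0 : A 0 = 1) {w : ℂ}
    (hw : ‖w‖ ≤ 1/2) : ‖(∑' k : ℕ, A k * w ^ k) - 1‖ ≤ 2 * C * ‖w‖ := by
  have hw1 : ‖w‖ < 1 := lt_of_le_of_lt hw (by norm_num)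
  have hC : 0 ≤ C := le_trans (norm_nonneg _) (hA 0)
  have hs : Summable (fun k => A k * w ^ k) := (summable_norm_coeff_pow hA hw1).of_norm
  rw [Summable.tsum_eq_zero_add hs, hA0, pow_zero, mul_one, add_sub_cancel_left]
  have hns : Summable (fun k => ‖A (k+1) * w ^ (k+1)‖) :=
    (summable_nat_add_iff (f := fun n => ‖A n * w ^ n‖) 1).mpr
      (summable_norm_coeff_pow hA hw1)
  calc ‖∑' k : ℕ, A (k+1) * w ^ (k+1)‖ ≤ ∑' k : ℕ, ‖A (k+1) * w ^ (k+1)‖ :=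
        norm_tsum_le_tsum_norm hns
    _ ≤ ∑' k : ℕ, (C * ‖w‖) * ‖w‖ ^ k := by
        apply Summable.tsum_le_tsum _ hns
          (((summable_geometric_of_lt_one (norm_nonneg w) hw1)).mul_left _)
        intro k
        rw [norm_mul, norm_pow, pow_succ]
        calc ‖A (k+1)‖ * (‖w‖ ^ k * ‖w‖) ≤ C * (‖w‖ ^ k * ‖w‖) :=
              mul_le_mul_of_nonneg_right (hA _) (by positivity)
          _ = C * ‖w‖ * ‖w‖ ^ k := by ring
    _ = (C * ‖w‖) * (1 - ‖w‖)⁻¹ := by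
        rw [tsum_mul_left, tsum_geometric_of_lt_one (norm_nonneg w) hw1]
    _ ≤ (C * ‖w‖) * 2 := by
        apply mul_le_mul_of_nonneg_left _ (by positivity)
        rw [inv_le_iff_one_le_mul₀ (by linarith)]
        nlinarith
    _ = 2 * C * ‖w‖ := by ring

lemma psum_tendsto_one {A : ℕ → ℂ} {C : ℝ} (hA : ∀ k, ‖A k‖ ≤ C) (hA0 : A 0 = 1)
    {q y : ℂ} (hq : ‖q‖ < 1) :
    Tendsto (fun N : ℕ => ∑' k : ℕ, A k * (q ^ N * y) ^ k) atTop (𝓝 1) := by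
  have hC : 0 ≤ C := le_trans (norm_nonneg _) (hA 0)
  rw [tendsto_iff_norm_sub_tendsto_zero]
  have h0 : Tendsto (fun N : ℕ => ‖q‖ ^ N * ‖y‖) atTop (𝓝 0) := by
    simpa using (tendsto_pow_atTop_nhds_zero_of_lt_one (norm_nonneg q) hq).mul_const ‖y‖
  apply squeeze_zero' (Eventually.of_forall fun N => norm_nonneg _)
    (g := fun N => 2 * C * (‖q‖ ^ N * ‖y‖)) ?_ ?_
  · filter_upwards [h0.eventually_le_const (by norm_num : (0:ℝ) < 1/2)] with N hN
    have hb : ‖q ^ N * y‖ ≤ ‖q‖ ^ N * ‖y‖ := by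
      rw [norm_mul, norm_pow]
    calc ‖(∑' k : ℕ, A k * (q ^ N * y) ^ k) - 1‖ ≤ 2 * C * ‖q ^ N * y‖ :=
          psum_sub_one_norm hA hA0 (le_trans hb hN)
      _ ≤ 2 * C * (‖q‖ ^ N * ‖y‖) := by
          apply mul_le_mul_of_nonneg_left hb (by positivity)
  · simpa using h0.const_mul (2 * C)

lemma hasProd_zero_of_eq_zero {f : ℕ → ℂ} (i : ℕ) (h : f i = 0) : HasProd f 0 := by
  unfold HasProd
  apply Tendsto.congr' _ tendsto_const_nhds
  filter_upwards [Filter.eventually_ge_atTop ({i} : Finset ℕ)] with s hs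
  exact (Finset.prod_eq_zero (hs (Finset.mem_singleton_self i)) h).symm

lemma multipliable_one_sub {q : ℂ} (hq : ‖q‖ < 1) (u : ℂ) :
    Multipliable (fun i : ℕ => 1 - u * q ^ i) := by
  by_cases h : ∀ i : ℕ, 1 - u * q ^ i ≠ 0
  · apply Complex.multipliable_of_summable_log
    apply Summable.of_norm_bounded_eventually_nat (g := fun i => 3/2 * (‖u‖ * ‖q‖ ^ i))
      (((summable_geometric_of_lt_one (norm_nonneg q) hq).mul_left ‖u‖).mul_left (3/2))
    have h0 : Tendsto (fun i : ℕ => ‖u‖ * ‖q‖ ^ i) atTop (𝓝 0) := by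
      simpa using (tendsto_pow_atTop_nhds_zero_of_lt_one (norm_nonneg q) hq).const_mul ‖u‖
    filter_upwards [h0.eventually_le_const (by norm_num : (0:ℝ) < 1/2)] with i hi
    have hui : ‖-(u * q ^ i)‖ ≤ 1/2 := by
      rw [norm_neg, norm_mul, norm_pow]; exact hi
    calc ‖Complex.log (1 - u * q ^ i)‖ = ‖Complex.log (1 + -(u * q ^ i))‖ := by
          rw [sub_eq_add_neg]
      _ ≤ 3/2 * ‖-(u * q ^ i)‖ := Complex.norm_log_one_add_half_le_self hui
      _ ≤ 3/2 * (‖u‖ * ‖q‖ ^ i) := by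
          rw [norm_neg, norm_mul, norm_pow]
  · push_neg at h
    obtain ⟨i, hi⟩ := h
    exact ⟨0, hasProd_zero_of_eq_zero i hi⟩

lemma key_product_identity {S : ℂ → ℂ} {q y α β : ℂ}
    (h1 : ∀ N : ℕ, S y * ∏ i ∈ Finset.range N, (1 - α * (q ^ i * y)) =
      S (q ^ N * y) * ∏ i ∈ Finset.range N, (1 - β * (q ^ i * y)))
    (h2 : Tendsto (fun N : ℕ => S (q ^ N * y)) atTop (𝓝 1))
    (hα : Multipliable fun i : ℕ => 1 - α * (q ^ i * y))
    (hβ : Multipliable fun i : ℕ => 1 - β * (q ^ i * y)) :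
    S y * ∏' i : ℕ, (1 - α * (q ^ i * y)) = ∏' i : ℕ, (1 - β * (q ^ i * y)) := by
  have l1 := hα.hasProd.tendsto_prod_nat.const_mul (S y)
  have l2 := h2.mul hβ.hasProd.tendsto_prod_nat
  rw [one_mul] at l2
  exact tendsto_nhds_unique (l1.congr fun N => (h1 N).symm ▸ rfl) (l2.congr fun N => (h1 N).symm)

lemma iterate_fe {S : ℂ → ℂ} {q α β : ℂ} {P : ℂ → Prop} (hP : ∀ w, P w → P (q * w))
    (hfe : ∀ w, P w → S w * (1 - α * w) = S (q * w) * (1 - β * w)) {y : ℂ} (hy : P y) :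
    ∀ N : ℕ, S y * ∏ i ∈ Finset.range N, (1 - α * (q ^ i * y)) =
      S (q ^ N * y) * ∏ i ∈ Finset.range N, (1 - β * (q ^ i * y)) := by
  have hPN : ∀ N : ℕ, P (q ^ N * y) := by
    intro N
    induction N with
    | zero => simpa using hy
    | succ n ih =>
      have := hP _ ih
      rwa [show q * (q ^ n * y) = q ^ (n+1) * y by ring] at this
  intro N
  induction N with
  | zero => simp
  | succ n ih =>
    rw [Finset.prod_range_succ, Finset.prod_range_succ]
    have := hfe _ (hPN n)
    rw [show q * (q ^ n * y) = q ^ (n+1) * y by ring] at this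
    linear_combination (1 - α * (q ^ n * y)) * ih +
      (∏ i ∈ Finset.range n, (1 - β * (q ^ i * y))) * this

end PsumAux

noncomputable def Bcoef (q : ℂ) (k : ℕ) : ℂ := (qPochN q k)⁻¹

noncomputable def Acoef (t : ℂ) (n : ℕ) : ℂ := (-1)^n * t^(n*(n+1)) * (qPochN (t^2) n)⁻¹

lemma Bcoef_zero (q : ℂ) : Bcoef q 0 = 1 := by simp [Bcoef, qPochN_zero]

lemma Acoef_zero (t : ℂ) : Acoef t 0 = 1 := by simp [Acoef, qPochN_zero]

lemma Bcoef_norm_le {q : ℂ} (hq : ‖q‖ < 1) (k : ℕ) :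
    ‖Bcoef q k‖ ≤ Real.exp (‖q‖ / (1 - ‖q‖) ^ 2) := by
  rw [Bcoef, norm_inv]
  have h := qPochN_norm_lower hq k
  rw [Real.exp_neg] at h
  calc ‖qPochN q k‖⁻¹ ≤ ((Real.exp (‖q‖ / (1 - ‖q‖) ^ 2))⁻¹)⁻¹ :=
        inv_anti₀ (by positivity) h
    _ = Real.exp (‖q‖ / (1 - ‖q‖) ^ 2) := inv_inv _

lemma Acoef_norm_le {t : ℂ} (ht : ‖t‖ < 1) (n : ℕ) :
    ‖Acoef t n‖ ≤ Real.exp (‖t^2‖ / (1 - ‖t^2‖) ^ 2) := by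
  have hq : ‖t^2‖ < 1 := by
    rw [norm_pow]
    exact pow_lt_one₀ (norm_nonneg t) ht two_ne_zero
  have h1 : ‖Acoef t n‖ = ‖t‖^(n*(n+1)) * ‖Bcoef (t^2) n‖ := by
    rw [Acoef, norm_mul, norm_mul, norm_pow, norm_pow, norm_neg, norm_one, one_pow, one_mul,
      Bcoef, norm_inv]
  rw [h1]
  calc ‖t‖^(n*(n+1)) * ‖Bcoef (t^2) n‖ ≤ 1 * ‖Bcoef (t^2) n‖ :=
        mul_le_mul_of_nonneg_right (pow_le_one₀ (norm_nonneg t) ht.le) (norm_nonneg _)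
    _ = ‖Bcoef (t^2) n‖ := one_mul _
    _ ≤ _ := Bcoef_norm_le hq n

lemma Bcoef_succ {q : ℂ} (k : ℕ) : Bcoef q (k+1) = Bcoef q k * (1 - q^(k+1))⁻¹ := by
  rw [Bcoef, Bcoef, qPochN_succ, mul_inv]

lemma Acoef_succ (t : ℂ) (n : ℕ) :
    Acoef t (n+1) = Acoef t n * (-(t^(2*(n+1)))) * (1 - (t^2)^(n+1))⁻¹ := by
  rw [Acoef, Acoef, qPochN_succ, mul_inv]
  have h1 : t^((n+1)*(n+2)) = t^(n*(n+1)) * t^(2*(n+1)) := by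
    rw [← pow_add]; congr 1; ring
  rw [pow_succ, show (n+1)*(n+1+1) = (n+1)*(n+2) by ring, h1]
  ring

lemma summable_norm_G {t : ℂ} (ht : ‖t‖ < 1) (w : ℂ) :
    Summable (fun n : ℕ => ‖Acoef t n * w ^ n‖) := by
  have hq : ‖(t^2 : ℂ)‖ < 1 := by
    rw [norm_pow]; exact pow_lt_one₀ (norm_nonneg t) ht two_ne_zero
  apply summable_of_ratio_norm_eventually_le (r := 1/2) (by norm_num)
  have hterm : ∀ n : ℕ, Acoef t (n+1) * w^(n+1) =
      (Acoef t n * w^n) * (-(t^(2*(n+1))) * (1 - (t^2)^(n+1))⁻¹ * w) := by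
    intro n
    rw [Acoef_succ, pow_succ]
    ring
  have h1 : Tendsto (fun n : ℕ => ‖(t^2:ℂ)‖^(n+1)) atTop (𝓝 0) := by
    have := tendsto_pow_atTop_nhds_zero_of_lt_one (norm_nonneg (t^2)) hq
    exact this.comp (tendsto_add_atTop_nat 1)
  have h2 : Tendsto (fun n : ℕ => ‖(t^2:ℂ)‖^(n+1) * ‖w‖) atTop (𝓝 0) := by
    simpa using h1.mul_const ‖w‖
  filter_upwards [h1.eventually_le_const (by norm_num : (0:ℝ) < 1/2),
    h2.eventually_le_const (by norm_num : (0:ℝ) < 1/4)] with n hn1 hn2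
  rw [Real.norm_of_nonneg (norm_nonneg _), Real.norm_of_nonneg (norm_nonneg _), hterm n,
    norm_mul, mul_comm (1/2 : ℝ)]
  apply mul_le_mul_of_nonneg_left _ (norm_nonneg _)
  have hden : (1:ℝ)/2 ≤ ‖1 - (t^2)^(n+1)‖ := by
    have hp : ‖((t^2 : ℂ))^(n+1)‖ ≤ 1/2 := by rw [norm_pow]; exact hn1
    calc (1:ℝ)/2 = 1 - 1/2 := by norm_num
      _ ≤ ‖(1:ℂ)‖ - ‖((t^2 : ℂ))^(n+1)‖ := by rw [norm_one]; linarith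
      _ ≤ ‖1 - (t^2)^(n+1)‖ := norm_sub_norm_le _ _
  have hnum : ‖t^(2*(n+1)) * w‖ ≤ 1/4 := by
    have he : (t : ℂ)^(2*(n+1)) = (t^2)^(n+1) := by rw [pow_mul]
    rw [he, norm_mul, norm_pow]
    exact hn2
  have heq : ‖-(t^(2*(n+1))) * (1 - (t^2)^(n+1))⁻¹ * w‖
      = ‖t^(2*(n+1)) * w‖ * ‖1 - (t^2)^(n+1)‖⁻¹ := by
    rw [norm_mul, norm_mul, norm_mul, norm_neg, norm_inv]
    ring
  rw [heq]
  calc ‖t^(2*(n+1)) * w‖ * ‖1 - (t^2)^(n+1)‖⁻¹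
      ≤ (1/4) * (1/2)⁻¹ :=
        mul_le_mul hnum (inv_anti₀ (by norm_num) hden) (by positivity) (by norm_num)
    _ = 1/2 := by norm_num

noncomputable def Fser (q w : ℂ) : ℂ := ∑' k : ℕ, Bcoef q k * w ^ k

noncomputable def Gser (t w : ℂ) : ℂ := ∑' n : ℕ, Acoef t n * w ^ n

lemma Fser_fe {q : ℂ} (hq : ‖q‖ < 1) {w : ℂ} (hw : ‖w‖ < 1) :
    Fser q (q * w) = Fser q w * (1 - w) := by
  have hqw : ‖q * w‖ < 1 := by
    rw [norm_mul]
    nlinarith [norm_nonneg q, norm_nonneg w]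
  have hB := fun k => Bcoef_norm_le hq k
  have S1 : Summable (fun k => Bcoef q k * w ^ k) := (summable_norm_coeff_pow hB hw).of_norm
  have S2 : Summable (fun k => Bcoef q k * (q*w) ^ k) := (summable_norm_coeff_pow hB hqw).of_norm
  have S1' : Summable (fun k => Bcoef q (k+1) * w ^ (k+1)) :=
    (summable_nat_add_iff (f := fun k => Bcoef q k * w ^ k) 1).mpr S1
  have S2' : Summable (fun k => Bcoef q (k+1) * (q*w) ^ (k+1)) :=
    (summable_nat_add_iff (f := fun k => Bcoef q k * (q*w) ^ k) 1).mpr S2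
  have hterm : ∀ k : ℕ, Bcoef q (k+1) * (q*w)^(k+1) - Bcoef q (k+1) * w^(k+1)
      = -w * (Bcoef q k * w ^ k) := by
    intro k
    have hne := one_sub_pow_ne_zero hq k
    rw [Bcoef_succ, mul_pow]
    field_simp
    ring
  have E1 : Fser q w = 1 + ∑' k : ℕ, Bcoef q (k+1) * w ^ (k+1) := by
    rw [Fser, Summable.tsum_eq_zero_add S1, Bcoef_zero, pow_zero, mul_one]
  have E2 : Fser q (q*w) = 1 + ∑' k : ℕ, Bcoef q (k+1) * (q*w) ^ (k+1) := by
    rw [Fser, Summable.tsum_eq_zero_add S2, Bcoef_zero, pow_zero, mul_one]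
  have E3 : (∑' k : ℕ, Bcoef q (k+1) * (q*w) ^ (k+1)) - ∑' k : ℕ, Bcoef q (k+1) * w ^ (k+1)
      = -w * Fser q w := by
    rw [← Summable.tsum_sub S2' S1', tsum_congr hterm, tsum_mul_left, Fser]
  linear_combination E2 - E1 + E3
  
lemma Gser_fe {t : ℂ} (ht : ‖t‖ < 1) (w : ℂ) :
    Gser t w = Gser t (t^2 * w) * (1 - t^2 * w) := by
  have hq : ‖(t^2 : ℂ)‖ < 1 := by
    rw [norm_pow]; exact pow_lt_one₀ (norm_nonneg t) ht two_ne_zero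
  have S1 : Summable (fun n => Acoef t n * w ^ n) := (summable_norm_G ht w).of_norm
  have S2 : Summable (fun n => Acoef t n * (t^2*w) ^ n) := (summable_norm_G ht (t^2*w)).of_norm
  have S1' : Summable (fun n => Acoef t (n+1) * w ^ (n+1)) :=
    (summable_nat_add_iff (f := fun n => Acoef t n * w ^ n) 1).mpr S1
  have S2' : Summable (fun n => Acoef t (n+1) * (t^2*w) ^ (n+1)) :=
    (summable_nat_add_iff (f := fun n => Acoef t n * (t^2*w) ^ n) 1).mpr S2
  have hterm : ∀ n : ℕ, Acoef t (n+1) * w^(n+1) - Acoef t (n+1) * (t^2*w)^(n+1)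
      = -(t^2*w) * (Acoef t n * (t^2*w) ^ n) := by
    intro n
    have hne := one_sub_pow_ne_zero hq n
    rw [Acoef_succ, mul_pow, show (2*(n+1)) = (n+1)*2 by ring, pow_mul]
    field_simp
    ring
  have E1 : Gser t w = 1 + ∑' n : ℕ, Acoef t (n+1) * w ^ (n+1) := by
    rw [Gser, Summable.tsum_eq_zero_add S1, Acoef_zero, pow_zero, mul_one]
  have E2 : Gser t (t^2*w) = 1 + ∑' n : ℕ, Acoef t (n+1) * (t^2*w) ^ (n+1) := by
    rw [Gser, Summable.tsum_eq_zero_add S2, Acoef_zero, pow_zero, mul_one]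
  have E3 : (∑' n : ℕ, Acoef t (n+1) * w ^ (n+1)) - ∑' n : ℕ, Acoef t (n+1) * (t^2*w) ^ (n+1)
      = -(t^2*w) * Gser t (t^2*w) := by
    rw [← Summable.tsum_sub S1' S2', tsum_congr hterm, tsum_mul_left, Gser]
  linear_combination E1 - E2 + E3

lemma Fser_eq {q : ℂ} (hq : ‖q‖ < 1) {y : ℂ} (hy : ‖y‖ < 1) :
    Fser q y * ∏' i : ℕ, (1 - y * q ^ i) = 1 := by
  have h1 : ∀ N : ℕ, Fser q y * ∏ i ∈ Finset.range N, (1 - (1:ℂ) * (q ^ i * y)) =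
      Fser q (q ^ N * y) * ∏ i ∈ Finset.range N, (1 - (0:ℂ) * (q ^ i * y)) := by
    apply iterate_fe (P := fun w => ‖w‖ < 1) ?_ ?_ hy
    · intro w hw
      rw [norm_mul]
      nlinarith [norm_nonneg q, norm_nonneg w]
    · intro w hw
      rw [zero_mul, sub_zero, mul_one, one_mul]
      exact (Fser_fe hq hw).symm
  have h2 : Tendsto (fun N : ℕ => Fser q (q ^ N * y)) atTop (𝓝 1) := by
    unfold Fser
    exact psum_tendsto_one (fun k => Bcoef_norm_le hq k) (Bcoef_zero q) hq
  have hα : Multipliable fun i : ℕ => 1 - (1:ℂ) * (q ^ i * y) := by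
    have he : (fun i : ℕ => 1 - (1:ℂ) * (q ^ i * y)) = fun i : ℕ => 1 - y * q ^ i := by
      funext i; ring
    rw [he]
    exact multipliable_one_sub hq y
  have hβ : Multipliable fun i : ℕ => 1 - (0:ℂ) * (q ^ i * y) := by
    simpa using multipliable_one (α := ℂ) (β := ℕ)
  have key := key_product_identity h1 h2 hα hβ
  simp only [zero_mul, sub_zero, one_mul] at key
  rw [show (∏' i : ℕ, (1 - y * q ^ i)) = ∏' i : ℕ, (1 - q ^ i * y) from
    tprod_congr fun i => by ring]
  rw [key, tprod_one]

lemma Gser_eq {t : ℂ} (ht : ‖t‖ < 1) (z : ℂ) :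
    Gser t z = ∏' i : ℕ, (1 - t ^ 2 * z * (t ^ 2) ^ i) := by
  have hq : ‖(t^2 : ℂ)‖ < 1 := by
    rw [norm_pow]; exact pow_lt_one₀ (norm_nonneg t) ht two_ne_zero
  have h1 : ∀ N : ℕ, Gser t z * ∏ i ∈ Finset.range N, (1 - (0:ℂ) * ((t^2) ^ i * z)) =
      Gser t ((t^2) ^ N * z) * ∏ i ∈ Finset.range N, (1 - (t^2) * ((t^2) ^ i * z)) := by
    apply iterate_fe (P := fun _ => True) (fun _ _ => trivial) ?_ trivial
    intro w _
    rw [zero_mul, sub_zero, mul_one]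
    exact Gser_fe ht w
  have h2 : Tendsto (fun N : ℕ => Gser t ((t^2) ^ N * z)) atTop (𝓝 1) := by
    unfold Gser
    exact psum_tendsto_one (fun n => Acoef_norm_le ht n) (Acoef_zero t) hq
  have hα : Multipliable fun i : ℕ => 1 - (0:ℂ) * ((t^2) ^ i * z) := by
    simpa using multipliable_one (α := ℂ) (β := ℕ)
  have hβ : Multipliable fun i : ℕ => 1 - (t^2) * ((t^2) ^ i * z) := by
    have he : (fun i : ℕ => 1 - (t^2 : ℂ) * ((t^2) ^ i * z)) =
        fun i : ℕ => 1 - (t^2 * z) * (t^2) ^ i := by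
      funext i; ring
    rw [he]
    exact multipliable_one_sub hq (t^2 * z)
  have key := key_product_identity h1 h2 hα hβ
  simp only [zero_mul, sub_zero, tprod_one, mul_one] at key
  rw [key]
  exact tprod_congr fun i => by ring

noncomputable def gfun (a b : ℕ → ℂ) : ℤ × ℕ → ℂ :=
  fun p => if 0 ≤ (p.2 : ℤ) + p.1 then a p.2 * b ((p.2 : ℤ) + p.1).toNat else 0

lemma tsum_gfun (a b : ℕ → ℂ) (hna : Summable fun n => ‖a n‖)
    (hnb : Summable fun k => ‖b k‖) :
    ∑' e : ℤ, ∑' n : ℕ, gfun a b (e, n) = (∑' n : ℕ, a n) * (∑' k : ℕ, b k) := by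
  have hab : Summable (fun pr : ℕ × ℕ => a pr.1 * b pr.2) :=
    summable_mul_of_summable_norm hna hnb
  set φ : ℕ × ℕ → ℤ × ℕ := fun pr => ((pr.2 : ℤ) - pr.1, pr.1) with hφdef
  have hφ : Function.Injective φ := by
    intro p1 p2 h
    simp only [hφdef, Prod.mk.injEq] at h
    obtain ⟨h1, h2⟩ := h
    ext
    · exact h2
    · omega
  have hcomp : ∀ pr : ℕ × ℕ, gfun a b (φ pr) = a pr.1 * b pr.2 := by
    rintro ⟨n, k⟩
    show (if 0 ≤ (n : ℤ) + ((k : ℤ) - n) then a n * b ((n : ℤ) + ((k : ℤ) - n)).toNat else 0)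
      = a n * b k
    rw [if_pos (by omega)]
    congr 1
    congr 1
    omega
  have hsupp : ∀ p ∉ Set.range φ, gfun a b p = 0 := by
    rintro ⟨e, n⟩ hp
    by_contra h
    apply hp
    have hcond : 0 ≤ (n : ℤ) + e := by
      by_contra hc
      exact h (if_neg hc)
    refine ⟨(n, ((n : ℤ) + e).toNat), ?_⟩
    simp only [hφdef, Prod.mk.injEq]
    constructor
    · omega
    · trivial
  have hgφsum : Summable (gfun a b ∘ φ) := by
    have he : (gfun a b ∘ φ) = fun pr : ℕ × ℕ => a pr.1 * b pr.2 := funext hcomp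
    rw [he]
    exact hab
  have hgsum : Summable (gfun a b) := (hφ.summable_iff hsupp).mp hgφsum
  have hsupp' : Function.support (gfun a b) ⊆ Set.range φ := by
    intro p hp
    by_contra hr
    exact hp (hsupp p hr)
  calc ∑' e : ℤ, ∑' n : ℕ, gfun a b (e, n) = ∑' p : ℤ × ℕ, gfun a b p :=
        (Summable.tsum_prod' hgsum fun e => hgsum.prod_factor e).symm
    _ = ∑' pr : ℕ × ℕ, gfun a b (φ pr) := (hφ.tsum_eq hsupp').symm
    _ = ∑' pr : ℕ × ℕ, a pr.1 * b pr.2 := tsum_congr hcomp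
    _ = (∑' n : ℕ, a n) * (∑' k : ℕ, b k) := (tsum_mul_tsum_of_summable_norm hna hnb).symm

/-- The tetrahedron index
`I_Δ(m,e) = ∑_{n ≥ max(0,-e)} (-1)^n q^{n(n+1)/2 - (n+e/2)m} / ((q)_n (q)_{n+e})`
evaluated at `q = t²` (so the exponent of `t` is `n(n+1) - (2n+e)m`). -/
noncomputable def IDelta (t : ℂ) (m e : ℤ) : ℂ :=
  ∑' n : ℕ,
    if 0 ≤ (n : ℤ) + e then
      (-1) ^ n * t ^ ((n : ℤ) * (n + 1) - (2 * n + e) * m) /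
        (qPochN (t ^ 2) n * qPochN (t ^ 2) ((n : ℤ) + e).toNat)
    else 0

/-- Generating function identity relating the tetrahedron index and the
quantum dilogarithm: `∑_{e ∈ ℤ} I_Δ(m,e) x^e = (q^{-m/2+1}x⁻¹;q)_∞ / (q^{-m/2}x;q)_∞`
with `q = t²`, `q^{-m/2} = t^{-m}`. -/
theorem IDelta_generating_function (t x : ℂ) (m : ℤ)
    (ht : ‖t‖ < 1) (ht0 : t ≠ 0) (hx : x ≠ 0) (hconv : ‖t ^ (-m) * x‖ < 1) :
    ∑' e : ℤ, IDelta t m e * x ^ e =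
      (∏' i : ℕ, (1 - t ^ (2 - m) * x⁻¹ * (t ^ 2) ^ i)) /
        ∏' i : ℕ, (1 - t ^ (-m) * x * (t ^ 2) ^ i) := by
  have hq : ‖(t ^ 2 : ℂ)‖ < 1 := by
    rw [norm_pow]; exact pow_lt_one₀ (norm_nonneg t) ht two_ne_zero
  set y : ℂ := t ^ (-m) * x with hy
  set z : ℂ := t ^ (-m) * x⁻¹ with hz
  set A0 : ℕ → ℂ := fun n => Acoef t n * z ^ n with hA0
  set B0 : ℕ → ℂ := fun k => Bcoef (t ^ 2) k * y ^ k with hB0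
  have hna : Summable fun n => ‖A0 n‖ := summable_norm_G ht z
  have hnb : Summable fun k => ‖B0 k‖ :=
    summable_norm_coeff_pow (fun k => Bcoef_norm_le hq k) hconv
  have stepA : ∀ e : ℤ, IDelta t m e * x ^ e = ∑' n : ℕ, gfun A0 B0 (e, n) := by
    intro e
    unfold IDelta
    rw [← tsum_mul_right]
    apply tsum_congr
    intro n
    show _ = (if 0 ≤ (n : ℤ) + e then A0 n * B0 ((n : ℤ) + e).toNat else 0)
    by_cases hcase : 0 ≤ (n : ℤ) + e
    · rw [if_pos hcase, if_pos hcase]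
      set k := ((n : ℤ) + e).toNat with hkdef
      have hk : (k : ℤ) = (n : ℤ) + e := Int.toNat_of_nonneg hcase
      have hpow : t ^ ((n : ℤ) * (n + 1) - (2 * n + e) * m) * x ^ e
          = t ^ (n * (n + 1)) * z ^ n * y ^ k := by
        rw [hz, hy, mul_pow, mul_pow, inv_pow]
        rw [← zpow_natCast (t ^ (-m)) n, ← zpow_natCast (t ^ (-m)) k,
          ← zpow_mul t, ← zpow_mul t, ← zpow_natCast t (n * (n + 1)),
          ← zpow_natCast x k, ← zpow_natCast x n, ← zpow_neg]
        rw [show t ^ ((n * (n + 1) : ℕ) : ℤ) * (t ^ (-m * (n : ℤ)) * x ^ (-(n : ℤ)))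
            * (t ^ (-m * (k : ℤ)) * x ^ (k : ℤ))
            = t ^ (((n * (n + 1) : ℕ) : ℤ) + -m * (n : ℤ) + -m * (k : ℤ)) *
              x ^ (-(n : ℤ) + (k : ℤ)) from by
          rw [zpow_add₀ ht0, zpow_add₀ ht0, zpow_add₀ hx]; ring]
        congr 1
        · congr 1
          push_cast
          rw [hk]
          ring
        · congr 1
          omega
      simp only [hA0, hB0, Acoef, Bcoef]
      rw [div_eq_mul_inv, mul_inv]
      linear_combination ((-1 : ℂ)) ^ n * (qPochN (t ^ 2) n)⁻¹ * (qPochN (t ^ 2) k)⁻¹ * hpow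
    · rw [if_neg hcase, if_neg hcase, zero_mul]
  rw [tsum_congr stepA, tsum_gfun A0 B0 hna hnb]
  have hF : Fser (t ^ 2) y * ∏' i : ℕ, (1 - y * (t ^ 2) ^ i) = 1 := Fser_eq hq hconv
  have hG : Gser t z = ∏' i : ℕ, (1 - t ^ 2 * z * (t ^ 2) ^ i) := Gser_eq ht z
  have hFval : Fser (t ^ 2) y = (∏' i : ℕ, (1 - y * (t ^ 2) ^ i))⁻¹ :=
    eq_inv_of_mul_eq_one_left hF
  have hnum : ∀ i : ℕ, 1 - t ^ 2 * z * (t ^ 2) ^ i = 1 - t ^ (2 - m) * x⁻¹ * (t ^ 2) ^ i := by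
    intro i
    have h2 : (t : ℂ) ^ (2 - m) = t ^ (2 : ℕ) * t ^ (-m) := by
      rw [show (2 - m : ℤ) = ((2 : ℕ) : ℤ) + (-m) by push_cast; ring, zpow_add₀ ht0,
        zpow_natCast]
    rw [h2, hz]
    ring
  calc (∑' n : ℕ, A0 n) * (∑' k : ℕ, B0 k) = Gser t z * Fser (t ^ 2) y := rfl
    _ = (∏' i : ℕ, (1 - t ^ 2 * z * (t ^ 2) ^ i)) *
        (∏' i : ℕ, (1 - y * (t ^ 2) ^ i))⁻¹ := by rw [hG, hFval]
    _ = (∏' i : ℕ, (1 - t ^ (2 - m) * x⁻¹ * (t ^ 2) ^ i)) /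
        ∏' i : ℕ, (1 - y * (t ^ 2) ^ i) := by
          rw [div_eq_mul_inv, tprod_congr hnum]
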